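/- Let $n \geq 2$ and let $e_1, \ldots, e_n$ denote the standard basis vectors of $\mathbb{R}^n$. The set of extreme points of the convex hull $T([n]) = \mathrm{Conv}(e_1, \ldots, e_n, 2e_1, \ldots, 2e_n)$ is exactly the set $\{e_1, \ldots, e_n, 2e_1, \ldots, 2e_n\}$; in particular, $T([n])$ has exactly $2n$ vertices. -/

import Mathlib

/-- The vertex set `{e₁, …, e_n, 2e₁, …, 2e_n}` of the truncated simplex `T([n])`. -/
def TVerts (n : ℕ) : Set (Fin n → ℝ) :=
  (Set.range fun i : Fin n => Pi.single i (1 : ℝ)) ∪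
    (Set.range fun i : Fin n => Pi.single i (2 : ℝ))

/-- A point of a finite set which strictly maximizes a linear functional is an
extreme point of the convex hull. -/
lemma exposed_extreme {E : Type*} [AddCommGroup E] [Module ℝ E]
    (s : Finset E) (f : E →ₗ[ℝ] ℝ)
    (x : E) (hx : x ∈ s) (h : ∀ y ∈ s, y ≠ x → f y < f x) :
    x ∈ Set.extremePoints ℝ (convexHull ℝ (s : Set E)) := by
  classical
  have bound : ∀ y ∈ convexHull ℝ (s : Set E), f y ≤ f x := by
    intro y hy
    have hsub : convexHull ℝ (s : Set E) ⊆ {y | f y ≤ f x} := by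
      apply convexHull_min
      · intro p hp
        simp only [Set.mem_setOf_eq]
        rcases eq_or_ne p x with rfl | hne
        · exact le_refl _
        · exact (h p hp hne).le
      · exact convex_halfSpace_le f.isLinear _
    exact hsub hy
  have key : ∀ y ∈ convexHull ℝ (s : Set E), f y = f x → y = x := by
    intro y hy hfy
    rw [Finset.convexHull_eq] at hy
    obtain ⟨w, hw0, hw1, hwy⟩ := hy
    rw [Finset.centerMass_eq_of_sum_1 _ _ hw1] at hwy
    simp only [id] at hwy
    have hzero : ∀ p ∈ s, p ≠ x → w p = 0 := by
      by_contra hcon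
      push_neg at hcon
      obtain ⟨q, hq, hqx, hwq⟩ := hcon
      have hwq' : 0 < w q := lt_of_le_of_ne (hw0 q hq) (Ne.symm hwq)
      have hfy2 : f y = ∑ p ∈ s, w p * f p := by
        rw [← hwy, map_sum]; simp [smul_eq_mul]
      have hlt : ∑ p ∈ s, w p * f p < ∑ p ∈ s, w p * f x := by
        apply Finset.sum_lt_sum
        · intro p hp
          rcases eq_or_ne p x with rfl | hne
          · exact le_refl _
          · exact mul_le_mul_of_nonneg_left (h p hp hne).le (hw0 p hp)
        · exact ⟨q, hq, by nlinarith [h q hq hqx]⟩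
      rw [← Finset.sum_mul, hw1, one_mul] at hlt
      rw [hfy2] at hfy; linarith
    have hwx : w x = 1 := by
      have h1 := hw1
      rwa [← Finset.add_sum_erase s w hx, Finset.sum_eq_zero
        (fun p hp => hzero p (Finset.mem_of_mem_erase hp) (Finset.ne_of_mem_erase hp)),
        add_zero] at h1
    rw [← hwy, ← Finset.add_sum_erase s _ hx, Finset.sum_eq_zero
      (fun p hp => by
        rw [hzero p (Finset.mem_of_mem_erase hp) (Finset.ne_of_mem_erase hp), zero_smul]),
      add_zero, hwx, one_smul]
  refine ⟨subset_convexHull ℝ _ hx, ?_⟩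
  intro y hy z hz hseg
  obtain ⟨a, b, ha, hb, hab, hx'⟩ := hseg
  have hfy := bound y hy
  have hfz := bound z hz
  have hfx : a * f y + b * f z = f x := by
    rw [← hx']; simp [map_add, map_smul, smul_eq_mul]
  have e1 : a * f x + b * f x = f x := by rw [← add_mul, hab, one_mul]
  have hy' : f y = f x := by
    by_contra hne
    have h1 : f y < f x := lt_of_le_of_ne hfy hne
    have h2 := mul_pos ha (sub_pos.mpr h1)
    have h3 := mul_le_mul_of_nonneg_left hfz hb.le
    nlinarith
  have hz' : f z = f x := by
    by_contra hne
    have h1 : f z < f x := lt_of_le_of_ne hfz hne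
    have h2 := mul_pos hb (sub_pos.mpr h1)
    have h3 := mul_le_mul_of_nonneg_left hfy ha.le
    nlinarith
  exact key y hy hy'

/-- The vertex set as a finset. -/
noncomputable def TVertsF (n : ℕ) : Finset (Fin n → ℝ) :=
  (Finset.univ.image fun i : Fin n => Pi.single i (1 : ℝ)) ∪
    (Finset.univ.image fun i : Fin n => Pi.single i (2 : ℝ))

lemma coe_TVertsF (n : ℕ) : (TVertsF n : Set (Fin n → ℝ)) = TVerts n := by
  simp only [TVertsF, Finset.coe_union, Finset.coe_image, Finset.coe_univ,
    Set.image_univ, TVerts]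

lemma single_ne_single {n : ℕ} {i j : Fin n} {a b : ℝ} (ha : 0 < a) (hab : a ≠ b) :
    (Pi.single i a : Fin n → ℝ) ≠ Pi.single j b := by
  intro hE
  rcases eq_or_ne i j with rfl | hij
  · have := congrFun hE i
    rw [Pi.single_eq_same, Pi.single_eq_same] at this
    exact hab this
  · have := congrFun hE i
    rw [Pi.single_eq_same, Pi.single_eq_of_ne hij] at this
    exact ha.ne' this

lemma single_inj {n : ℕ} {a : ℝ} (ha : a ≠ 0) :
    Function.Injective fun i : Fin n => (Pi.single i a : Fin n → ℝ) := by
  intro i j hE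
  by_contra hij
  have := congrFun hE i
  simp only [Pi.single_eq_same, Pi.single_eq_of_ne hij] at this
  exact ha this

/-- for `n ≥ 2`, the set of extreme points of the truncated simplex
`T([n]) = Conv(e₁,…,e_n, 2e₁,…,2e_n)` is exactly `{e₁,…,e_n, 2e₁,…,2e_n}`;
in particular `T([n])` has exactly `2n` vertices. -/
theorem statement7 (n : ℕ) (hn : 2 ≤ n) :
    Set.extremePoints ℝ (convexHull ℝ (TVerts n)) = TVerts n ∧
    (Set.extremePoints ℝ (convexHull ℝ (TVerts n))).ncard = 2 * n := by
  have hmemF : ∀ i : Fin n, ∀ a : ℝ, Pi.single i a ∈ TVertsF n →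
      True := fun _ _ _ => trivial
  have hEq : Set.extremePoints ℝ (convexHull ℝ (TVerts n)) = TVerts n := by
    apply Set.Subset.antisymm (extremePoints_convexHull_subset)
    intro x hx
    rw [← coe_TVertsF]
    simp only [TVerts, Set.mem_union, Set.mem_range] at hx
    rcases hx with ⟨i, rfl⟩ | ⟨i, rfl⟩
    · -- x = e_i ; use f y = y i - 2 * ∑ j, y j
      refine exposed_extreme (TVertsF n)
        (LinearMap.proj i - (2 : ℝ) • (∑ j : Fin n, LinearMap.proj j)) _ ?_ ?_
      · exact Finset.mem_union_left _ (Finset.mem_image_of_mem _ (Finset.mem_univ i))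
      · have hfval : ∀ (j : Fin n) (a : ℝ),
            (LinearMap.proj i - (2 : ℝ) • (∑ j : Fin n, LinearMap.proj j) :
              (Fin n → ℝ) →ₗ[ℝ] ℝ) (Pi.single j a)
              = (if i = j then a else 0) - 2 * a := by
          intro j a
          simp [LinearMap.sub_apply, LinearMap.smul_apply, LinearMap.sum_apply,
            LinearMap.proj_apply, Pi.single_apply, smul_eq_mul]
        intro y hy hyx
        simp only [TVertsF, Finset.mem_union, Finset.mem_image, Finset.mem_univ,
          true_and] at hy
        rcases hy with ⟨j, rfl⟩ | ⟨j, rfl⟩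
        · rcases eq_or_ne i j with rfl | hij
          · exact absurd rfl hyx
          · rw [hfval, hfval, if_pos rfl, if_neg hij]; norm_num
        · rw [hfval, hfval, if_pos rfl]
          rcases eq_or_ne i j with rfl | hij
          · rw [if_pos rfl]; norm_num
          · rw [if_neg hij]; norm_num
    · -- x = 2e_i ; use f y = y i
      refine exposed_extreme (TVertsF n) (LinearMap.proj i) _ ?_ ?_
      · exact Finset.mem_union_right _ (Finset.mem_image_of_mem _ (Finset.mem_univ i))
      · intro y hy hyx
        simp only [TVertsF, Finset.mem_union, Finset.mem_image, Finset.mem_univ,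
          true_and] at hy
        rcases hy with ⟨j, rfl⟩ | ⟨j, rfl⟩
        · simp only [LinearMap.proj_apply, Pi.single_eq_same, Pi.single_apply]
          split <;> norm_num
        · have hij : j ≠ i := by
            rintro rfl; exact hyx rfl
          simp only [LinearMap.proj_apply, Pi.single_eq_same,
            Pi.single_eq_of_ne (Ne.symm hij)]
          norm_num
  refine ⟨hEq, ?_⟩
  rw [hEq, ← coe_TVertsF, Set.ncard_coe_finset]
  have hdisj : Disjoint (Finset.univ.image fun i : Fin n => Pi.single i (1 : ℝ))
      (Finset.univ.image fun i : Fin n => Pi.single i (2 : ℝ)) := by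
    rw [Finset.disjoint_left]
    rintro x hx hx'
    simp only [Finset.mem_image, Finset.mem_univ, true_and] at hx hx'
    obtain ⟨i, rfl⟩ := hx
    obtain ⟨j, hj⟩ := hx'
    exact single_ne_single (by norm_num) (by norm_num) hj.symm
  rw [TVertsF, Finset.card_union_of_disjoint hdisj,
    Finset.card_image_of_injective _ (single_inj one_ne_zero),
    Finset.card_image_of_injective _ (single_inj two_ne_zero)]
  simp [two_mul]
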